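/- Let p > 2 and let (a_j)_{j≥0} be a nonincreasing sequence of nonnegative reals with a_j → 0 as j → ∞. If ∑_{j=0}^∞ 2^{(p-2)j} (a_j - a_{j+1})^p < ∞, then ∑_{k=0}^∞ 2^{(p-2)k} a_k^p < ∞. -/

import Mathlib

open Filter

open scoped ENNReal

/-- Hölder's inequality for `tsum` in `ℝ≥0∞`. -/
lemma ennreal_inner_le_Lp_mul_Lq_tsum (f g : ℕ → ℝ≥0∞) {p q : ℝ}
    (hpq : p.HolderConjugate q) :
    ∑' i, f i * g i ≤ (∑' i, f i ^ p) ^ (1 / p) * (∑' i, g i ^ q) ^ (1 / q) := by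
  rw [ENNReal.tsum_eq_iSup_sum]
  refine iSup_le fun s => ?_
  calc ∑ i ∈ s, f i * g i
      ≤ (∑ i ∈ s, f i ^ p) ^ (1 / p) * (∑ i ∈ s, g i ^ q) ^ (1 / q) :=
        ENNReal.inner_le_Lp_mul_Lq s f g hpq
    _ ≤ _ := mul_le_mul'
        (ENNReal.rpow_le_rpow (ENNReal.sum_le_tsum s) hpq.one_div_nonneg)
        (ENNReal.rpow_le_rpow (ENNReal.sum_le_tsum s) hpq.symm.one_div_nonneg)

/-- If `p > 2`, `(a_j)` is a nonincreasing sequence of nonnegative reals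
tending to `0`, and `∑ 2^((p-2)j) (a_j - a_{j+1})^p < ∞`, then `∑ 2^((p-2)k) a_k^p < ∞`. -/
theorem summable_of_summable_differences
    (p : ℝ) (hp : 2 < p) (a : ℕ → ℝ)
    (ha0 : ∀ j, 0 ≤ a j)
    (hanti : Antitone a)
    (hlim : Tendsto a atTop (nhds 0))
    (hsum : Summable fun j : ℕ => (2:ℝ) ^ ((p - 2) * (j:ℝ)) * (a j - a (j + 1)) ^ p) :
    Summable fun k : ℕ => (2:ℝ) ^ ((p - 2) * (k:ℝ)) * a k ^ p := by
  set c : ℝ := p - 2 with hcdef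
  have hc : (0:ℝ) < c := by simp [hcdef]; linarith
  have hp0 : (0:ℝ) < p := by linarith
  have hp1 : (1:ℝ) < p := by linarith
  set q : ℝ := Real.conjExponent p with hqdef
  have hpq : p.HolderConjugate q := Real.HolderConjugate.conjExponent hp1
  set ε : ℝ := c / (2 * p) with hεdef
  have hε : 0 < ε := by positivity
  have hεp : ε * p = c / 2 := by rw [hεdef]; field_simp
  have h2ne : (2 : ℝ≥0∞) ≠ 0 := by norm_num
  have h2top : (2 : ℝ≥0∞) ≠ ⊤ := by norm_num
  have h2one : (1 : ℝ≥0∞) < 2 := by norm_num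
  -- differences
  have hb : ∀ j, 0 ≤ a j - a (j + 1) := fun j => sub_nonneg.2 (hanti (Nat.le_succ j))
  set B : ℕ → ℝ≥0∞ := fun j => ENNReal.ofReal (a j - a (j + 1)) with hBdef
  -- telescoping
  have htel : ∀ k, HasSum (fun m => a (k + m) - a (k + m + 1)) (a k) := by
    intro k
    rw [hasSum_iff_tendsto_nat_of_nonneg (fun m => hb (k + m))]
    have hsr : ∀ n, ∑ m ∈ Finset.range n, (a (k + m) - a (k + m + 1)) = a k - a (k + n) := by
      intro n
      simpa [add_assoc] using Finset.sum_range_sub' (fun m => a (k + m)) n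
    simp only [hsr]
    have h2 : Tendsto (fun n : ℕ => a (k + n)) atTop (nhds 0) :=
      hlim.comp (tendsto_atTop_atTop_of_monotone (fun _ _ h => by omega)
        (fun b => ⟨b, Nat.le_add_left b k⟩))
    simpa using tendsto_const_nhds.sub h2
  have hA : ∀ k, ENNReal.ofReal (a k) = ∑' m, B (k + m) := by
    intro k
    rw [← (htel k).tsum_eq, ENNReal.ofReal_tsum_of_nonneg (fun m => hb _) (htel k).summable]
  -- S
  set S : ℝ≥0∞ := ∑' j : ℕ, (2:ℝ≥0∞) ^ (c * (j:ℝ)) * B j ^ p with hSdef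
  have hofS : ∀ j : ℕ, ENNReal.ofReal ((2:ℝ) ^ (c * (j:ℝ)) * (a j - a (j + 1)) ^ p)
      = (2:ℝ≥0∞) ^ (c * (j:ℝ)) * B j ^ p := by
    intro j
    rw [ENNReal.ofReal_mul (Real.rpow_nonneg (by norm_num) _),
      ← ENNReal.ofReal_rpow_of_nonneg (hb j) hp0.le,
      show ENNReal.ofReal ((2:ℝ) ^ (c * (j:ℝ))) = (2:ℝ≥0∞) ^ (c * (j:ℝ)) by
        rw [← ENNReal.ofReal_rpow_of_pos (by norm_num)]; norm_num]
  have hS : S ≠ ⊤ := by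
    have := ENNReal.ofReal_tsum_of_nonneg
      (fun j => mul_nonneg (Real.rpow_nonneg (by norm_num) _) (Real.rpow_nonneg (hb j) _)) hsum
    rw [hSdef, ← tsum_congr hofS, ← this]
    exact ENNReal.ofReal_ne_top
  -- geometric ratios
  set r1 : ℝ≥0∞ := (2:ℝ≥0∞) ^ (-(ε * q)) with hr1def
  set r2 : ℝ≥0∞ := (2:ℝ≥0∞) ^ (-(c / 2)) with hr2def
  have hr1 : r1 < 1 := ENNReal.rpow_lt_one_of_one_lt_of_neg h2one
    (neg_lt_zero.mpr (mul_pos hε hpq.symm.pos))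
  have hr2 : r2 < 1 := ENNReal.rpow_lt_one_of_one_lt_of_neg h2one
    (neg_lt_zero.mpr (by linarith))
  set K : ℝ≥0∞ := (∑' m : ℕ, r1 ^ m) ^ (1 / q) with hKdef
  have hKtop : K ≠ ⊤ := by
    apply ENNReal.rpow_ne_top_of_nonneg hpq.symm.one_div_nonneg
    rw [ENNReal.tsum_geometric]
    simp [ENNReal.inv_ne_top, tsub_eq_zero_iff_le, hr1.not_ge]
  set T : ℕ → ℝ≥0∞ := fun k : ℕ => ∑' m : ℕ, (2:ℝ≥0∞) ^ ((c / 2) * (m:ℝ)) * B (k + m) ^ p with hTdef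
  -- Hölder per k
  have hHolder : ∀ k, ENNReal.ofReal (a k) ^ p ≤ K ^ p * T k := by
    intro k
    have key : ENNReal.ofReal (a k) ≤ K * T k ^ (1 / p) := by
      rw [hA k]
      have hfg : ∀ m : ℕ, B (k + m)
          = ((2:ℝ≥0∞) ^ (-(ε * (m:ℝ)))) * ((2:ℝ≥0∞) ^ (ε * (m:ℝ)) * B (k + m)) := by
        intro m
        rw [← mul_assoc, ← ENNReal.rpow_add _ _ h2ne h2top, neg_add_cancel,
          ENNReal.rpow_zero, one_mul]
      calc ∑' m : ℕ, B (k + m)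
          = ∑' m : ℕ, ((2:ℝ≥0∞) ^ (-(ε * (m:ℝ)))) * ((2:ℝ≥0∞) ^ (ε * (m:ℝ)) * B (k + m)) :=
            tsum_congr hfg
        _ ≤ (∑' m : ℕ, ((2:ℝ≥0∞) ^ (-(ε * (m:ℝ)))) ^ q) ^ (1 / q)
            * (∑' m : ℕ, ((2:ℝ≥0∞) ^ (ε * (m:ℝ)) * B (k + m)) ^ p) ^ (1 / p) :=
            ennreal_inner_le_Lp_mul_Lq_tsum _ _ hpq.symm
        _ = K * T k ^ (1 / p) := by
            congr 1
            · rw [hKdef]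
              congr 1
              refine tsum_congr fun m => ?_
              rw [← ENNReal.rpow_natCast r1 m, hr1def, ← ENNReal.rpow_mul, ← ENNReal.rpow_mul]
              congr 1
              ring
            · rw [hTdef]
              congr 1
              refine tsum_congr fun m => ?_
              rw [ENNReal.mul_rpow_of_nonneg _ _ hp0.le, ← ENNReal.rpow_mul]
              congr 2
              rw [← hεp]; ring
    calc ENNReal.ofReal (a k) ^ p ≤ (K * T k ^ (1 / p)) ^ p :=
          ENNReal.rpow_le_rpow key hp0.le
      _ = K ^ p * T k := by
          rw [ENNReal.mul_rpow_of_nonneg _ _ hp0.le, ← ENNReal.rpow_mul (T k),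
            one_div, inv_mul_cancel₀ hp0.ne', ENNReal.rpow_one]
  -- main estimate
  have hmain : (∑' k : ℕ, (2:ℝ≥0∞) ^ (c * (k:ℝ)) * ENNReal.ofReal (a k) ^ p) ≠ ⊤ := by
    have step1 : (∑' k : ℕ, (2:ℝ≥0∞) ^ (c * (k:ℝ)) * ENNReal.ofReal (a k) ^ p)
        ≤ K ^ p * ∑' k : ℕ, (2:ℝ≥0∞) ^ (c * (k:ℝ)) * T k := by
      rw [← ENNReal.tsum_mul_left]
      refine ENNReal.tsum_le_tsum fun k => ?_
      calc (2:ℝ≥0∞) ^ (c * (k:ℝ)) * ENNReal.ofReal (a k) ^ p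
          ≤ (2:ℝ≥0∞) ^ (c * (k:ℝ)) * (K ^ p * T k) := mul_le_mul_right (hHolder k) _
        _ = K ^ p * ((2:ℝ≥0∞) ^ (c * (k:ℝ)) * T k) := by ring
    have step2 : (∑' k : ℕ, (2:ℝ≥0∞) ^ (c * (k:ℝ)) * T k)
        ≤ (∑' m : ℕ, r2 ^ m) * S := by
      have hswap : (∑' k : ℕ, (2:ℝ≥0∞) ^ (c * (k:ℝ)) * T k)
          = ∑' m : ℕ, ∑' k : ℕ, (2:ℝ≥0∞) ^ (c * (k:ℝ)) *
              ((2:ℝ≥0∞) ^ ((c / 2) * (m:ℝ)) * B (k + m) ^ p) := by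
        rw [← ENNReal.tsum_comm]
        refine tsum_congr fun k => ?_
        rw [hTdef, ← ENNReal.tsum_mul_left]
      rw [hswap, ← ENNReal.tsum_mul_right]
      refine ENNReal.tsum_le_tsum fun m => ?_
      have hin : ∀ k : ℕ, (2:ℝ≥0∞) ^ (c * (k:ℝ)) *
          ((2:ℝ≥0∞) ^ ((c / 2) * (m:ℝ)) * B (k + m) ^ p)
          = r2 ^ m * ((2:ℝ≥0∞) ^ (c * ((k + m : ℕ):ℝ)) * B (k + m) ^ p) := by
        intro k
        rw [← ENNReal.rpow_natCast r2 m, hr2def, ← ENNReal.rpow_mul, ← mul_assoc, ← mul_assoc,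
          ← ENNReal.rpow_add _ _ h2ne h2top, ← ENNReal.rpow_add _ _ h2ne h2top]
        congr 2
        push_cast
        ring
      calc (∑' k : ℕ, (2:ℝ≥0∞) ^ (c * (k:ℝ)) *
            ((2:ℝ≥0∞) ^ ((c / 2) * (m:ℝ)) * B (k + m) ^ p))
          = r2 ^ m * ∑' k : ℕ, (2:ℝ≥0∞) ^ (c * ((k + m : ℕ):ℝ)) * B (k + m) ^ p := by
            rw [← ENNReal.tsum_mul_left]; exact tsum_congr hin
        _ ≤ r2 ^ m * S := by
            refine mul_le_mul_right ?_ _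
            rw [hSdef]
            exact ENNReal.tsum_comp_le_tsum_of_injective (add_left_injective m) _
    refine ne_top_of_le_ne_top ?_ (step1.trans (mul_le_mul_right step2 _))
    apply ENNReal.mul_ne_top (ENNReal.rpow_ne_top_of_nonneg hp0.le hKtop)
    apply ENNReal.mul_ne_top _ hS
    rw [ENNReal.tsum_geometric]
    simp [ENNReal.inv_ne_top, tsub_eq_zero_iff_le, hr2.not_ge]
  -- conclude
  have hof : ∀ k : ℕ, ENNReal.ofReal ((2:ℝ) ^ (c * (k:ℝ)) * a k ^ p)
      = (2:ℝ≥0∞) ^ (c * (k:ℝ)) * ENNReal.ofReal (a k) ^ p := by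
    intro k
    rw [ENNReal.ofReal_mul (Real.rpow_nonneg (by norm_num) _),
      ← ENNReal.ofReal_rpow_of_nonneg (ha0 k) hp0.le,
      show ENNReal.ofReal ((2:ℝ) ^ (c * (k:ℝ))) = (2:ℝ≥0∞) ^ (c * (k:ℝ)) by
        rw [← ENNReal.ofReal_rpow_of_pos (by norm_num)]; norm_num]
  refine (ENNReal.summable_toReal hmain).congr fun k => ?_
  rw [← hof k, ENNReal.toReal_ofReal
    (mul_nonneg (Real.rpow_nonneg (by norm_num) _) (Real.rpow_nonneg (ha0 k) _))]
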